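/- Let G be a cubic graph with an orientation D admitting a circular nowhere-zero r-flow, and let V₁ (resp. V₂) be the set of vertices of out-degree 1 (resp. 2) in D. If the subgraph of G induced by V₁ contains a path on three vertices, then r ≥ 5. -/
import Mathlib


open SimpleGraph

/-- A cubic graph: every vertex has degree 3. -/
def IsCubic {V : Type*} [Fintype V] (G : SimpleGraph V) : Prop :=
  ∀ v : V, Nat.card (G.neighborSet v) = 3

/-- A circular nowhere-zero `r`-flow: an orientation `dir` of `G` together with
a flow value `f` on each directed edge, with values in `[1, r-1]` and flow
conservation at every vertex. -/
structure CNZF {V : Type*} [Fintype V] (G : SimpleGraph V) (r : ℝ) where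
  dir : V → V → Bool
  f : V → V → ℝ
  orients : ∀ u v, G.Adj u v ↔ (dir u v = true ∨ dir v u = true)
  asymm : ∀ u v, dir u v = true → dir v u = false
  lb : ∀ u v, dir u v = true → 1 ≤ f u v
  ub : ∀ u v, dir u v = true → f u v ≤ r - 1
  conserv : ∀ v : V, (∑ u : V, if dir v u = true then f v u else 0)
      = ∑ u : V, if dir u v = true then f u v else 0

/-- Out-degree of a vertex in an orientation. -/
noncomputable def outDeg {V : Type*} (dir : V → V → Bool) (v : V) : ℕ :=
  Nat.card {u | dir v u = true}

/-- Every connected component of the subgraph induced by `S` is a tree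
on at most `m` vertices. -/
def MonoOK {V : Type*} (G : SimpleGraph V) (m : ℕ) (S : Set V) : Prop :=
  (G.induce S).IsAcyclic ∧
    ∀ c : (G.induce S).ConnectedComponent, Nat.card c.supp ≤ m

/-- A `k`-weak bisection, given by its first part `S`. -/
def IsWeakBisection {V : Type*} [Fintype V] (G : SimpleGraph V) (k : ℕ) (S : Set V) : Prop :=
  Nat.card S = Nat.card (Sᶜ : Set V) ∧ MonoOK G (k-2) S ∧ MonoOK G (k-2) (Sᶜ : Set V)

/-- Every monochromatic component of the 2-coloring `c` has at most `m` vertices. -/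
def MonoAtMost {V : Type*} (G : SimpleGraph V) (c : V → Bool) (m : ℕ) : Prop :=
  ∀ b : Bool, ∀ comp : (G.induce {v | c v = b}).ConnectedComponent,
    Nat.card comp.supp ≤ m

/-- Edges of `L_k` (on vertex labels `0, …, 5+2k`): `L_0` is `K_{3,3}` minus an
edge (parts `{0,1,4}` and `{2,3,5}`, edge `45` removed, degree-2 vertices `4,5`);
at step `j` the two new adjacent vertices `4+2j, 5+2j` are attached to the
previous degree-2 vertices `2+2j, 3+2j`. The degree-2 vertices of `L_k` are
`4+2k` and `5+2k`. -/
def LEdge (k : ℕ) (a b : ℕ) : Prop :=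
  (a, b) ∈ ({(0,2),(0,3),(0,5),(1,2),(1,3),(1,5),(4,2),(4,3)} : Set (ℕ × ℕ)) ∨
  ∃ j, 1 ≤ j ∧ j ≤ k ∧
    ((a, b) = (4+2*j, 5+2*j) ∨ (a, b) = (2+2*j, 4+2*j) ∨ (a, b) = (3+2*j, 5+2*j))

/-- The graph `L_k`. -/
def Lgraph (k : ℕ) : SimpleGraph (Fin (6+2*k)) :=
  SimpleGraph.fromRel (fun a b => LEdge k a.val b.val)

/-- Edges of `T_k`: one copy of `L'_k` (the copy of `L_k` on `0..5+2k` with apex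
`6+2k`), two copies of `L'_0` (on `7+2k..12+2k` with apex `13+2k`, and on
`14+2k..19+2k` with apex `20+2k`), and a central vertex `21+2k` adjacent to the
three apexes. -/
def TEdge (k : ℕ) (a b : ℕ) : Prop :=
  LEdge k a b
  ∨ (a = 6+2*k ∧ (b = 4+2*k ∨ b = 5+2*k))
  ∨ (∃ a' b', LEdge 0 a' b' ∧ a = 7+2*k+a' ∧ b = 7+2*k+b')
  ∨ (a = 13+2*k ∧ (b = 11+2*k ∨ b = 12+2*k))
  ∨ (∃ a' b', LEdge 0 a' b' ∧ a = 14+2*k+a' ∧ b = 14+2*k+b')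
  ∨ (a = 20+2*k ∧ (b = 18+2*k ∨ b = 19+2*k))
  ∨ (a = 21+2*k ∧ (b = 6+2*k ∨ b = 13+2*k ∨ b = 20+2*k))

/-- The cubic graph `T_k`. -/
def Tgraph (k : ℕ) : SimpleGraph (Fin (22+2*k)) :=
  SimpleGraph.fromRel (fun a b => TEdge k a.val b.val)

/-- A valid factor of `G`: a spanning subgraph all of whose components are paths
or cycles (equivalently, all degrees are 1 or 2), such that the two endpoints
(degree-1 vertices) of every odd component are non-adjacent in `G`; in particular
no component is an isolated vertex. -/
def IsValidFactor {V : Type*} (G H : SimpleGraph V) : Prop :=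
  H ≤ G ∧
  (∀ v : V, 1 ≤ Nat.card (H.neighborSet v) ∧ Nat.card (H.neighborSet v) ≤ 2) ∧
  ∀ c : H.ConnectedComponent, Odd (Nat.card c.supp) →
    ∀ u v : V, u ∈ c.supp → v ∈ c.supp → u ≠ v →
      Nat.card (H.neighborSet u) = 1 → Nat.card (H.neighborSet v) = 1 → ¬ G.Adj u v

/-- A component of `H` is a cycle iff all its vertices have degree 2 in `H`. -/
def IsCycleComp {V : Type*} (H : SimpleGraph V) (c : H.ConnectedComponent) : Prop :=
  ∀ v ∈ c.supp, Nat.card (H.neighborSet v) = 2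

/-- An odd cycle component. -/
def OddCycleComp {V : Type*} (H : SimpleGraph V) (c : H.ConnectedComponent) : Prop :=
  Odd (Nat.card c.supp) ∧ IsCycleComp H c

/-- An odd path component (a component with an odd number of vertices containing
a degree-1 vertex). -/
def OddPathComp {V : Type*} (H : SimpleGraph V) (c : H.ConnectedComponent) : Prop :=
  Odd (Nat.card c.supp) ∧ ∃ v ∈ c.supp, Nat.card (H.neighborSet v) = 1

noncomputable def numComponents {V : Type*} (H : SimpleGraph V) : ℕ := Nat.card H.ConnectedComponent

noncomputable def numOddCycles {V : Type*} (H : SimpleGraph V) : ℕ :=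
  Nat.card {c : H.ConnectedComponent // OddCycleComp H c}

/-- `H` is a valid factor of `G` with the minimum number of components. -/
def MinimizesComponents {V : Type*} (G H : SimpleGraph V) : Prop :=
  IsValidFactor G H ∧ ∀ H' : SimpleGraph V, IsValidFactor G H' →
    numComponents H ≤ numComponents H'

/-- `H` is a valid factor of `G` minimizing the number of components and,
subject to that, the number of odd cycles. -/
def IsMinValidFactor {V : Type*} (G H : SimpleGraph V) : Prop :=
  MinimizesComponents G H ∧
  ∀ H' : SimpleGraph V, IsValidFactor G H' →
    numComponents H' = numComponents H → numOddCycles H ≤ numOddCycles H'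

/-- An external vertex of a factor: an endpoint of a path component, or a vertex
of an odd cycle component. -/
def ExternalVtx {V : Type*} (H : SimpleGraph V) (v : V) : Prop :=
  Nat.card (H.neighborSet v) = 1 ∨ OddCycleComp H (H.connectedComponentMk v)

lemma cnzf_key {V : Type*} [Fintype V] {G : SimpleGraph V} {r : ℝ}
    (hG : IsCubic G) (c : CNZF G r) (v : V) (hv : outDeg c.dir v = 1) :
    ∃ w s t, c.dir v w = true ∧ (∀ u, c.dir v u = true → u = w) ∧
      c.dir s v = true ∧ c.dir t v = true ∧ s ≠ t ∧
      (∀ u, c.dir u v = true → u = s ∨ u = t) ∧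
      c.f v w = c.f s v + c.f t v := by
  classical
  set Fo := Finset.univ.filter (fun u => c.dir v u = true) with hFo
  set Fi := Finset.univ.filter (fun u => c.dir u v = true) with hFi
  have hcardo : Fo.card = 1 := by
    have h := hv
    rw [outDeg, Nat.card_eq_fintype_card] at h
    rw [hFo, ← h]
    exact (Fintype.card_subtype _).symm
  have hcube : Fo.card + Fi.card = 3 := by
    have h3 := hG v
    have hN : G.neighborSet v = {u | c.dir v u = true ∨ c.dir u v = true} := by
      ext u
      simp only [SimpleGraph.mem_neighborSet, Set.mem_setOf_eq]
      exact c.orients v u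
    rw [hN, Nat.card_eq_fintype_card] at h3
    rw [Fintype.card_subtype] at h3
    have hdisj : Disjoint Fo Fi := by
      rw [Finset.disjoint_left]
      intro a ha hb
      rw [hFo, Finset.mem_filter] at ha
      rw [hFi, Finset.mem_filter] at hb
      have := c.asymm v a ha.2
      rw [hb.2] at this
      exact Bool.true_eq_false.mp this
    rw [← Finset.card_union_of_disjoint hdisj]
    rw [hFo, hFi, ← Finset.filter_or]
    exact h3
  have hcardi : Fi.card = 2 := by omega
  obtain ⟨w, hw⟩ := Finset.card_eq_one.mp hcardo
  obtain ⟨s, t, hst, hstE⟩ := Finset.card_eq_two.mp hcardi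
  have hmemFo : ∀ u, c.dir v u = true ↔ u ∈ Fo := by
    intro u; simp [hFo]
  have hmemFi : ∀ u, c.dir u v = true ↔ u ∈ Fi := by
    intro u; simp [hFi]
  have hcons := c.conserv v
  rw [← Finset.sum_filter, ← Finset.sum_filter] at hcons
  refine ⟨w, s, t, ?_, ?_, ?_, ?_, hst, ?_, ?_⟩
  · rw [hmemFo, hw]; exact Finset.mem_singleton_self w
  · intro u hu
    rw [hmemFo, hw, Finset.mem_singleton] at hu; exact hu
  · rw [hmemFi, hstE]; exact Finset.mem_insert_self s {t}
  · rw [hmemFi, hstE]; simp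
  · intro u hu
    rw [hmemFi, hstE] at hu
    simpa using hu
  · rw [← hFo, ← hFi, hw, hstE] at hcons
    rw [Finset.sum_singleton, Finset.sum_pair hst] at hcons
    exact hcons

lemma cnzf_key2 {V : Type*} [Fintype V] {G : SimpleGraph V} {r : ℝ}
    (hG : IsCubic G) (c : CNZF G r) (v : V) (hv : outDeg c.dir v = 1) :
    ∃ w, c.dir v w = true ∧ (∀ u, c.dir v u = true → u = w) ∧
      2 ≤ c.f v w ∧ (∀ u, c.dir u v = true → c.f u v + 1 ≤ c.f v w) ∧
      (∀ a b, c.dir a v = true → c.dir b v = true → a ≠ b →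
        c.f a v + c.f b v ≤ c.f v w) := by
  obtain ⟨w, s, t, hw, huw, hs, ht, hst, hin, heq⟩ := cnzf_key hG c v hv
  have hls := c.lb s v hs
  have hlt := c.lb t v ht
  refine ⟨w, hw, huw, by linarith, ?_, ?_⟩
  · intro u hu
    rcases hin u hu with rfl | rfl <;> linarith
  · intro a b ha hb hab
    rcases hin a ha with rfl | rfl <;> rcases hin b hb with rfl | rfl
    · exact absurd rfl hab
    · linarith
    · linarith
    · exact absurd rfl hab

/-- If the vertices of out-degree 1 of an orientation with a circular
nowhere-zero r-flow induce a path on three vertices, then r ≥ 5. -/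
theorem stmt1 {V : Type*} [Fintype V] (G : SimpleGraph V) (r : ℝ)
    (hG : IsCubic G) (c : CNZF G r) (x y z : V)
    (hx : outDeg c.dir x = 1) (hy : outDeg c.dir y = 1) (hz : outDeg c.dir z = 1)
    (hxy : G.Adj x y) (hyz : G.Adj y z) (hxz : x ≠ z) :
    5 ≤ r := by
  obtain ⟨wx, hwx, hux, h2x, hinx, hpairx⟩ := cnzf_key2 hG c x hx
  obtain ⟨wy, hwy, huy, h2y, hiny, hpairy⟩ := cnzf_key2 hG c y hy
  obtain ⟨wz, hwz, huz, h2z, hinz, hpairz⟩ := cnzf_key2 hG c z hz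
  rcases (c.orients x y).mp hxy with hxy' | hyx'
  · -- x → y, so wx = y and f x y ≥ 2
    have hwxy : y = wx := hux y hxy'
    have hfxy : 2 ≤ c.f x y := by rw [hwxy]; exact h2x
    rcases (c.orients y z).mp hyz with hyz' | hzy'
    · -- y → z, so wy = z
      have hwyz : z = wy := huy z hyz'
      have h1 : c.f x y + 1 ≤ c.f y z := by
        have := hiny x hxy'; rwa [← hwyz] at this
      have h2 : c.f y z + 1 ≤ c.f z wz := hinz y hyz'
      have hub := c.ub z wz hwz
      linarith
    · -- z → y, so wz = y, f z y ≥ 2, and both x, z flow into y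
      have hwzy : y = wz := huz y hzy'
      have hfzy : 2 ≤ c.f z y := by rw [hwzy]; exact h2z
      have h1 : c.f x y + c.f z y ≤ c.f y wy := hpairy x z hxy' hzy' hxz
      have hub := c.ub y wy hwy
      linarith
  · -- y → x, so wy = x
    have hwyx : x = wy := huy x hyx'
    rcases (c.orients y z).mp hyz with hyz' | hzy'
    · exact absurd (hwyx.trans (huy z hyz').symm) hxz
    · -- z → y
      have hwzy : y = wz := huz y hzy'
      have hfzy : 2 ≤ c.f z y := by rw [hwzy]; exact h2z
      have h1 : c.f z y + 1 ≤ c.f y x := by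
        have := hiny z hzy'; rwa [← hwyx] at this
      have h2 : c.f y x + 1 ≤ c.f x wx := hinx y hyx'
      have hub := c.ub x wx hwx
      linarith
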